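/- Let p_t(0,·) be the heat kernel at time t of the continuous-time nearest-neighbor random walk on Z/NZ. Then for all y and all t > 0, |p_t(0,y) − 1/N| ≤ (2/N)·1/(e^{λ₁ t} − 1), where λ₁ = 2(1 − cos(2π/N)). In particular, if t ≥ N² (so e^{λ₁ t} ≥ 3 for N large), then |p_t(0,y) − 1/N| ≤ (4/N)e^{−λ₁ t} and p_t(0,y) ≤ 2/N. -/

import Mathlib

open NormedSpace Matrix Finset
set_option linter.unusedSectionVars false

/-- The generator (discrete Laplacian) of the continuous-time nearest-neighbour random
walk on the discrete circle `Z/NZ`. -/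
def cycleLap (N : ℕ) [NeZero N] : Matrix (ZMod N) (ZMod N) ℝ :=
  Matrix.of fun i j =>
    (if j = i + 1 then (1 : ℝ) else 0) + (if j = i - 1 then 1 else 0)
      - (if j = i then 2 else 0)

noncomputable section Stmt11Aux

namespace Stmt11

variable (N : ℕ) [NeZero N]

/-- standard primitive N-th root of unity -/
def ζ : ℂ := Complex.exp (2 * Real.pi * Complex.I / N)

lemma hζprim : IsPrimitiveRoot (ζ N) N :=
  Complex.isPrimitiveRoot_exp N (NeZero.ne N)

lemma hζN : ζ N ^ N = 1 := (hζprim N).pow_eq_one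

lemma pow_mod (m : ℕ) : ζ N ^ (m % N) = ζ N ^ m := by
  conv_rhs => rw [← Nat.div_add_mod m N, pow_add, pow_mul, hζN, one_pow, one_mul]

/-- character -/
def e (a : ZMod N) : ℂ := ζ N ^ a.val

lemma e_zero : e N 0 = 1 := by
  simp [e, ZMod.val_zero]

lemma e_add (a b : ZMod N) : e N (a + b) = e N a * e N b := by
  rw [e, e, e, ZMod.val_add, pow_mod, pow_add]

lemma e_mul (a b : ZMod N) : e N (a * b) = e N a ^ b.val := by
  rw [e, e, ZMod.val_mul, pow_mod, pow_mul]

lemma e_abs (a : ZMod N) : ‖e N a‖ = 1 := by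
  have : ζ N = Complex.exp (((2 * Real.pi / N : ℝ) : ℂ) * Complex.I) := by
    rw [ζ]; push_cast; ring_nf
  rw [e, norm_pow, this, Complex.norm_exp_ofReal_mul_I, one_pow]

lemma sum_e (a : ZMod N) : ∑ i : ZMod N, e N (a * i) = if a = 0 then (N : ℂ) else 0 := by
  have hcast : ∑ i : ZMod N, e N (a * i) = ∑ k ∈ range N, e N a ^ k := by
    simp_rw [e_mul]
    exact Finset.sum_nbij' (fun i => i.val) (fun k => (k : ZMod N))
      (fun i _ => Finset.mem_range.2 (ZMod.val_lt i)) (fun k _ => Finset.mem_univ _)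
      (fun i _ => ZMod.natCast_rightInverse i)
      (fun k hk => ZMod.val_cast_of_lt (Finset.mem_range.1 hk))
      (fun i _ => rfl)
  rw [hcast]
  split_ifs with h
  · subst h; simp [e_zero, e]
  · have hne : e N a ≠ 1 := by
      have hv : 0 < a.val := Nat.pos_of_ne_zero (fun hh => h ((ZMod.val_eq_zero a).1 hh))
      exact (hζprim N).pow_ne_one_of_pos_of_lt hv.ne' (ZMod.val_lt a)
    rw [geom_sum_eq hne]
    have : e N a ^ N = 1 := by rw [e, ← pow_mul, mul_comm, pow_mul, hζN, one_pow]
    rw [this, sub_self, zero_div]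

/-- Fourier matrix -/
def P : Matrix (ZMod N) (ZMod N) ℂ := Matrix.of fun x i => e N (x * i)

/-- inverse Fourier matrix -/
def Q : Matrix (ZMod N) (ZMod N) ℂ := Matrix.of fun i y => (N : ℂ)⁻¹ * e N (-(i * y))

lemma hNne : (N : ℂ) ≠ 0 := Nat.cast_ne_zero.2 (NeZero.ne N)

lemma hPQ : P N * Q N = 1 := by
  ext x y
  simp only [Matrix.mul_apply, P, Q, Matrix.of_apply, Matrix.one_apply]
  have h1 : ∀ i : ZMod N, e N (x * i) * ((N:ℂ)⁻¹ * e N (-(i * y)))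
      = (N:ℂ)⁻¹ * e N ((x - y) * i) := by
    intro i
    have harg : x * i + -(i * y) = (x - y) * i := by ring
    rw [mul_left_comm, ← e_add, harg]
  simp_rw [h1]
  rw [← Finset.mul_sum, sum_e]
  rcases eq_or_ne x y with rfl | h
  · simp [sub_self, inv_mul_cancel₀ (hNne N)]
  · rw [if_neg (sub_ne_zero.2 h), if_neg h, mul_zero]

lemma hQP : Q N * P N = 1 := by
  ext i j
  simp only [Matrix.mul_apply, P, Q, Matrix.of_apply, Matrix.one_apply]
  have h1 : ∀ x : ZMod N, (N:ℂ)⁻¹ * e N (-(i * x)) * e N (x * j)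
      = (N:ℂ)⁻¹ * e N ((j - i) * x) := by
    intro x
    have harg : -(i * x) + x * j = (j - i) * x := by ring
    rw [mul_assoc, ← e_add, harg]
  simp_rw [h1]
  rw [← Finset.mul_sum, sum_e]
  rcases eq_or_ne i j with rfl | h
  · simp [sub_self, inv_mul_cancel₀ (hNne N)]
  · rw [if_neg (sub_ne_zero.2 (Ne.symm h)), if_neg h, mul_zero]

/-- the Fourier matrix as a unit -/
def U : (Matrix (ZMod N) (ZMod N) ℂ)ˣ := ⟨P N, Q N, hPQ N, hQP N⟩

/-- eigenvalues -/
def μ (i : ZMod N) : ℂ := e N i + e N (-i) - 2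

lemma lap_mul_P : (cycleLap N).map Complex.ofReal * P N = P N * Matrix.diagonal (μ N) := by
  ext x i
  rw [Matrix.mul_diagonal]
  simp only [Matrix.mul_apply, Matrix.map_apply, cycleLap, Matrix.of_apply, P,
    Complex.ofReal_sub, Complex.ofReal_add, apply_ite (Complex.ofReal),
    Complex.ofReal_one, Complex.ofReal_zero, Complex.ofReal_ofNat]
  simp only [add_mul, sub_mul, ite_mul, one_mul, zero_mul]
  rw [Finset.sum_sub_distrib, Finset.sum_add_distrib]
  simp only [Finset.sum_ite_eq' Finset.univ, Finset.mem_univ, if_true]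
  have hx1 : e N ((x + 1) * i) = e N (x * i) * e N i := by
    rw [← e_add]; congr 1; ring
  have hx2 : e N ((x - 1) * i) = e N (x * i) * e N (-i) := by
    rw [← e_add]; congr 1; ring
  rw [hx1, hx2, μ]
  ring

lemma lap_eq : (cycleLap N).map Complex.ofReal = P N * Matrix.diagonal (μ N) * Q N := by
  calc (cycleLap N).map Complex.ofReal
      = (cycleLap N).map Complex.ofReal * (P N * Q N) := by rw [hPQ, Matrix.mul_one]
    _ = (cycleLap N).map Complex.ofReal * P N * Q N := by rw [Matrix.mul_assoc]
    _ = P N * Matrix.diagonal (μ N) * Q N := by rw [lap_mul_P]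

lemma exp_entry (t : ℝ) (y : ZMod N) :
    NormedSpace.exp (t • cycleLap N) 0 y
      = (∑ i : ZMod N, Complex.exp ((t : ℂ) * μ N i) * ((N:ℂ)⁻¹ * e N (-(i * y)))).re := by
  have h1 : (NormedSpace.exp (t • cycleLap N)).map Complex.ofReal
      = NormedSpace.exp ((t • cycleLap N).map Complex.ofReal) := by
    open scoped Matrix.Norms.Operator in
    exact map_exp (Complex.ofRealHom.mapMatrix :
        Matrix (ZMod N) (ZMod N) ℝ →+* Matrix (ZMod N) (ZMod N) ℂ)
      (continuous_id.matrix_map Complex.continuous_ofReal) _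
  have h2 : (t • cycleLap N).map Complex.ofReal
      = P N * Matrix.diagonal (fun i => (t : ℂ) * μ N i) * Q N := by
    have : (t • cycleLap N).map Complex.ofReal
        = (t : ℂ) • (cycleLap N).map Complex.ofReal := by
      ext x j
      simp [Matrix.map_apply, Complex.ofReal_mul, Complex.real_smul]
    rw [this, lap_eq, ← Matrix.smul_mul, ← Matrix.mul_smul, ← Matrix.diagonal_smul]
    congr 1
  have h3 : NormedSpace.exp ((t • cycleLap N).map Complex.ofReal)
      = P N * Matrix.diagonal (fun i => Complex.exp ((t:ℂ) * μ N i)) * Q N := by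
    rw [h2]
    have hP : P N = ((U N : (Matrix (ZMod N) (ZMod N) ℂ)ˣ) : Matrix (ZMod N) (ZMod N) ℂ) := rfl
    have hQ : Q N = (((U N)⁻¹ : (Matrix (ZMod N) (ZMod N) ℂ)ˣ) : Matrix (ZMod N) (ZMod N) ℂ) := rfl
    rw [hP, hQ, Matrix.exp_units_conj, Matrix.exp_diagonal]
    rw [Pi.exp_def, ← Complex.exp_eq_exp_ℂ]
  have h4 : NormedSpace.exp (t • cycleLap N) 0 y
      = (((NormedSpace.exp (t • cycleLap N)).map Complex.ofReal) 0 y).re := by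
    simp [Matrix.map_apply]
  rw [h4, h1, h3]
  congr 1
  rw [Matrix.mul_assoc, Matrix.mul_apply]
  refine Finset.sum_congr rfl fun i _ => ?_
  have hP0 : P N 0 i = 1 := by
    show e N (0 * i) = 1
    rw [zero_mul, e_zero]
  rw [hP0, one_mul, Matrix.mul_apply]
  rw [Finset.sum_eq_single i]
  · simp [Matrix.diagonal_apply_eq, Q]
  · intro b _ hb
    simp [Matrix.diagonal_apply_ne' _ hb]
  · simp

lemma e_eq (i : ZMod N) :
    e N i = Complex.exp (((2 * Real.pi * i.val / N : ℝ) : ℂ) * Complex.I) := by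
  rw [e, ζ, ← Complex.exp_nat_mul]
  congr 1
  push_cast
  ring

lemma e_ne_zero (i : ZMod N) : e N i ≠ 0 := by
  intro h
  have := e_abs N i
  rw [h] at this
  simp at this

lemma mu_eq (i : ZMod N) :
    μ N i = ((2 * Real.cos (2 * Real.pi * i.val / N) - 2 : ℝ) : ℂ) := by
  have hconj : e N (-i) = starRingEnd ℂ (e N i) := by
    rw [← Complex.inv_eq_conj (e_abs N i)]
    refine eq_inv_of_mul_eq_one_left ?_
    rw [← e_add, neg_add_cancel, e_zero]
  have hre : (e N i).re = Real.cos (2 * Real.pi * i.val / N) := by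
    rw [e_eq]
    exact Complex.exp_ofReal_mul_I_re _
  rw [μ, hconj, Complex.add_conj, hre]
  push_cast
  ring

lemma term_exp (t : ℝ) (i : ZMod N) :
    Complex.exp ((t : ℂ) * μ N i)
      = ((Real.exp (t * (2 * Real.cos (2 * Real.pi * i.val / N) - 2)) : ℝ) : ℂ) := by
  rw [mu_eq, ← Complex.ofReal_mul, Complex.ofReal_exp]

lemma term_abs (t : ℝ) (y i : ZMod N) :
    ‖Complex.exp ((t : ℂ) * μ N i) * ((N:ℂ)⁻¹ * e N (-(i * y)))‖
      = (N : ℝ)⁻¹ * Real.exp (t * (2 * Real.cos (2 * Real.pi * i.val / N) - 2)) := by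
  rw [term_exp, norm_mul, norm_mul, Complex.norm_real, Real.norm_eq_abs, norm_inv,
    Complex.norm_natCast, e_abs, abs_of_pos (Real.exp_pos _), mul_one]
  ring

lemma key_bound (t : ℝ) (y : ZMod N) :
    |NormedSpace.exp (t • cycleLap N) 0 y - 1 / N|
      ≤ (N:ℝ)⁻¹ * ∑ i ∈ Finset.univ.erase (0 : ZMod N),
          Real.exp (t * (2 * Real.cos (2 * Real.pi * i.val / N) - 2)) := by
  rw [exp_entry]
  rw [← Finset.add_sum_erase _ _ (Finset.mem_univ (0 : ZMod N))]
  have h0 : Complex.exp ((t : ℂ) * μ N 0) * ((N:ℂ)⁻¹ * e N (-(0 * y))) = (N:ℂ)⁻¹ := by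
    have : μ N 0 = 0 := by
      rw [μ, neg_zero, e_zero]
      ring
    rw [this, mul_zero, Complex.exp_zero, one_mul, zero_mul, neg_zero, e_zero, mul_one]
  rw [h0, Complex.add_re]
  have hNre : ((N:ℂ)⁻¹).re = 1 / (N : ℝ) := by
    rw [show ((N:ℂ))⁻¹ = (((N:ℝ)⁻¹ : ℝ) : ℂ) by push_cast; ring]
    rw [Complex.ofReal_re, one_div]
  rw [hNre]
  have hstep : |1 / (N:ℝ) + (∑ i ∈ Finset.univ.erase (0 : ZMod N),
      Complex.exp ((t : ℂ) * μ N i) * ((N:ℂ)⁻¹ * e N (-(i * y)))).re - 1 / N|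
      = |(∑ i ∈ Finset.univ.erase (0 : ZMod N),
      Complex.exp ((t : ℂ) * μ N i) * ((N:ℂ)⁻¹ * e N (-(i * y)))).re| := by
    congr 1
    ring
  rw [hstep]
  calc |(∑ i ∈ Finset.univ.erase (0 : ZMod N),
      Complex.exp ((t : ℂ) * μ N i) * ((N:ℂ)⁻¹ * e N (-(i * y)))).re|
      ≤ ‖∑ i ∈ Finset.univ.erase (0 : ZMod N),
        Complex.exp ((t : ℂ) * μ N i) * ((N:ℂ)⁻¹ * e N (-(i * y)))‖ :=
        Complex.abs_re_le_norm _
    _ ≤ ∑ i ∈ Finset.univ.erase (0 : ZMod N),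
        ‖Complex.exp ((t : ℂ) * μ N i) * ((N:ℂ)⁻¹ * e N (-(i * y)))‖ := by
        exact (norm_sum_le _ _)
    _ = (N:ℝ)⁻¹ * ∑ i ∈ Finset.univ.erase (0 : ZMod N),
        Real.exp (t * (2 * Real.cos (2 * Real.pi * i.val / N) - 2)) := by
        rw [Finset.mul_sum]
        exact Finset.sum_congr rfl fun i _ => term_abs N t y i

/-- sin is at least its value at the endpoints on `[a, π - a]`. -/
lemma sin_ge_sin {a θ : ℝ} (ha0 : 0 ≤ a) (h1 : a ≤ θ) (h2 : θ ≤ Real.pi - a) :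
    Real.sin a ≤ Real.sin θ := by
  rcases le_total θ (Real.pi / 2) with h | h
  · exact Real.sin_le_sin_of_le_of_le_pi_div_two (by linarith [Real.pi_pos]) h h1
  · rw [← Real.sin_pi_sub θ]
    exact Real.sin_le_sin_of_le_of_le_pi_div_two (by linarith [Real.pi_pos]) (by linarith)
      (by linarith)

lemma one_sub_cos {x : ℝ} : 1 - Real.cos x = 2 * Real.sin (x / 2) ^ 2 := by
  have h := Real.sin_sq_eq_half_sub (x / 2)
  rw [show 2 * (x / 2) = x by ring] at h
  linarith

lemma cos_telescope {x : ℝ} (hx : 0 ≤ x) :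
    ∀ m : ℕ, (m : ℝ) * x ≤ Real.pi → (m : ℝ) * (1 - Real.cos x) ≤ 1 - Real.cos (m * x) := by
  intro m
  induction m with
  | zero => intro _; simp
  | succ m ih =>
    intro hm
    push_cast at hm ⊢
    have hmx : (m : ℝ) * x ≤ Real.pi := by nlinarith [Nat.cast_nonneg (α := ℝ) m]
    have ihm := ih hmx
    push_cast at ihm
    have hxpi : x ≤ Real.pi := by nlinarith [Nat.cast_nonneg (α := ℝ) m]
    have hs0 : 0 ≤ Real.sin (x / 2) :=
      Real.sin_nonneg_of_nonneg_of_le_pi (by linarith) (by linarith)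
    have hss : Real.sin (x / 2) ≤ Real.sin (((2 * m + 1) * x) / 2) := by
      apply sin_ge_sin (by linarith)
      · nlinarith [Nat.cast_nonneg (α := ℝ) m]
      · nlinarith [Nat.cast_nonneg (α := ℝ) m]
    have hstep : 1 - Real.cos x ≤ Real.cos ((m : ℝ) * x) - Real.cos (((m : ℝ) + 1) * x) := by
      have hcc : Real.cos ((m : ℝ) * x) - Real.cos (((m : ℝ) + 1) * x)
          = 2 * Real.sin (((2 * m + 1) * x) / 2) * Real.sin (x / 2) := by
        rw [Real.cos_sub_cos]
        rw [show ((m : ℝ) * x + ((m : ℝ) + 1) * x) / 2 = ((2 * m + 1) * x) / 2 by ring,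
            show ((m : ℝ) * x - ((m : ℝ) + 1) * x) / 2 = -(x / 2) by ring, Real.sin_neg]
        ring
      rw [hcc, one_sub_cos]
      nlinarith
    linarith

lemma lam_ge {k : ℕ} (hk1 : 1 ≤ k) (hkN : k < N) :
    (min k (N - k) : ℝ) * (2 * (1 - Real.cos (2 * Real.pi / N)))
      ≤ 2 * (1 - Real.cos (2 * Real.pi * k / N)) := by
  set m := min k (N - k) with hm
  have hN0 : 0 < N := Nat.pos_of_ne_zero (NeZero.ne N)
  have h2m : 2 * m ≤ N := by
    have h1 : m ≤ k := min_le_left _ _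
    have h2 : m ≤ N - k := min_le_right _ _
    omega
  have hx : (0 : ℝ) ≤ 2 * Real.pi / N := by positivity
  have h2mR : (2 * m : ℝ) ≤ (N : ℝ) := by exact_mod_cast h2m
  have hNpos : (0:ℝ) < (N : ℝ) := by positivity
  have hmx : (m : ℝ) * (2 * Real.pi / N) ≤ Real.pi := by
    rw [show (m:ℝ) * (2 * Real.pi / N) = (2 * m : ℝ) * Real.pi / N by ring,
      div_le_iff₀ hNpos]
    nlinarith [Real.pi_pos]
  have hcoseq : Real.cos (2 * Real.pi * k / N) = Real.cos ((m : ℝ) * (2 * Real.pi / N)) := by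
    rcases min_cases k (N - k) with ⟨h, _⟩ | ⟨h, _⟩
    · rw [hm, h]; congr 1; ring
    · rw [hm, h]
      have hNk : ((N - k : ℕ) : ℝ) = (N : ℝ) - k := by
        push_cast [Nat.cast_sub hkN.le]; ring
      rw [hNk]
      rw [show ((N : ℝ) - k) * (2 * Real.pi / N) = 2 * Real.pi - 2 * Real.pi * k / N by
        field_simp]
      rw [Real.cos_two_pi_sub]
  have hmain := cos_telescope hx m hmx
  have hcast : ((m : ℕ) : ℝ) = min (k : ℝ) ((N : ℝ) - (k : ℝ)) := by
    simp [hm, Nat.cast_min, Nat.cast_sub hkN.le]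
  rw [hcoseq, ← hcast]
  linarith

lemma sum_val (f : ℕ → ℝ) :
    ∑ i ∈ Finset.univ.erase (0 : ZMod N), f i.val = ∑ k ∈ Finset.Ico 1 N, f k := by
  refine Finset.sum_nbij' (fun i => i.val) (fun k => (k : ZMod N)) ?_ ?_ ?_ ?_ ?_
  · intro i hi
    have hne : i ≠ 0 := Finset.ne_of_mem_erase hi
    have h0 : i.val ≠ 0 := fun h => hne ((ZMod.val_eq_zero i).1 h)
    exact Finset.mem_Ico.2 ⟨Nat.one_le_iff_ne_zero.2 h0, ZMod.val_lt i⟩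
  · intro k hk
    rcases Finset.mem_Ico.1 hk with ⟨hk1, hk2⟩
    refine Finset.mem_erase.2 ⟨?_, Finset.mem_univ _⟩
    intro h
    have h0 : ((k : ZMod N)) = 0 := h
    have := ZMod.val_cast_of_lt hk2
    rw [h0, ZMod.val_zero] at this
    omega
  · intro i _
    exact ZMod.natCast_rightInverse i
  · intro k hk
    exact ZMod.val_cast_of_lt (Finset.mem_Ico.1 hk).2
  · intro i _
    rfl

lemma lam1_ge (hN : 3 ≤ N) : 16 / (N:ℝ)^2 ≤ 2 * (1 - Real.cos (2 * Real.pi / N)) := by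
  have hN3 : (3:ℝ) ≤ (N:ℝ) := by exact_mod_cast hN
  have hNpos : (0:ℝ) < N := by linarith
  have hx : |2 * Real.pi / N| ≤ Real.pi := by
    rw [abs_of_nonneg (by positivity), div_le_iff₀ hNpos]
    nlinarith [Real.pi_pos]
  have hcos := Real.cos_le_one_sub_mul_cos_sq hx
  have hπ : (0:ℝ) < Real.pi := Real.pi_pos
  have heq : 2 / Real.pi ^ 2 * (2 * Real.pi / N) ^ 2 = 8 / (N:ℝ)^2 := by
    field_simp
    ring
  rw [heq] at hcos
  have h16 : 16 / (N:ℝ)^2 = 2 * (8 / (N:ℝ)^2) := by ring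
  linarith

lemma sum_exp_le (hN : 3 ≤ N) {t : ℝ} (ht : 0 < t) :
    ∑ k ∈ Finset.Ico 1 N, Real.exp (t * (2 * Real.cos (2 * Real.pi * k / N) - 2))
      ≤ 2 * (Real.exp (-(2 * (1 - Real.cos (2 * Real.pi / N)) * t))
        / (1 - Real.exp (-(2 * (1 - Real.cos (2 * Real.pi / N)) * t)))) := by
  set Λ : ℝ := 2 * (1 - Real.cos (2 * Real.pi / N)) with hΛdef
  have hΛ : 0 < Λ := lt_of_lt_of_le (by positivity) (lam1_ge N hN)
  set r : ℝ := Real.exp (-(Λ * t)) with hrdef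
  have hr0 : 0 < r := Real.exp_pos _
  have hr1 : r < 1 := by
    rw [hrdef, Real.exp_lt_one_iff]
    nlinarith
  have hpow : ∀ m : ℕ, r ^ m = Real.exp (-((m : ℝ) * Λ * t)) := by
    intro m
    rw [hrdef, ← Real.exp_nat_mul]
    congr 1
    ring
  have hterm : ∀ k ∈ Finset.Ico 1 N, Real.exp (t * (2 * Real.cos (2 * Real.pi * k / N) - 2))
      ≤ r ^ k + r ^ (N - k) := by
    intro k hk
    rcases Finset.mem_Ico.1 hk with ⟨hk1, hk2⟩
    have hmin := lam_ge N hk1 hk2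
    rw [← hΛdef] at hmin
    have hcast : ((N - k : ℕ) : ℝ) = (N : ℝ) - k := Nat.cast_sub hk2.le
    rcases le_total (k : ℝ) ((N : ℝ) - k) with h | h
    · have hminval : min (k : ℝ) ((N : ℝ) - k) = (k : ℝ) := min_eq_left h
      rw [hminval] at hmin
      have : Real.exp (t * (2 * Real.cos (2 * Real.pi * k / N) - 2))
          ≤ r ^ k := by
        rw [hpow k]
        apply Real.exp_le_exp.2
        nlinarith [mul_le_mul_of_nonneg_right hmin ht.le]
      exact this.trans (le_add_of_nonneg_right (by positivity))
    · have hminval : min (k : ℝ) ((N : ℝ) - k) = (N : ℝ) - k := min_eq_right h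
      rw [hminval] at hmin
      have : Real.exp (t * (2 * Real.cos (2 * Real.pi * k / N) - 2))
          ≤ r ^ (N - k) := by
        rw [hpow (N - k), hcast]
        apply Real.exp_le_exp.2
        nlinarith [mul_le_mul_of_nonneg_right hmin ht.le]
      exact this.trans (le_add_of_nonneg_left (by positivity))
  calc ∑ k ∈ Finset.Ico 1 N, Real.exp (t * (2 * Real.cos (2 * Real.pi * k / N) - 2))
      ≤ ∑ k ∈ Finset.Ico 1 N, (r ^ k + r ^ (N - k)) := Finset.sum_le_sum hterm
    _ = (∑ k ∈ Finset.Ico 1 N, r ^ k) + ∑ k ∈ Finset.Ico 1 N, r ^ (N - k) :=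
        Finset.sum_add_distrib
    _ = (∑ k ∈ Finset.Ico 1 N, r ^ k) + ∑ k ∈ Finset.Ico 1 N, r ^ k := by
        congr 1
        refine Finset.sum_nbij' (fun k => N - k) (fun k => N - k)
          (fun k hk => ?_) (fun k hk => ?_) (fun k hk => ?_) (fun k hk => ?_)
          (fun k hk => rfl)
        · simp only [Finset.mem_Ico] at hk ⊢; omega
        · simp only [Finset.mem_Ico] at hk ⊢; omega
        · simp only [Finset.mem_Ico] at hk; show N - (N - k) = k; omega
        · simp only [Finset.mem_Ico] at hk; show N - (N - k) = k; omega
    _ = 2 * ∑ k ∈ Finset.Ico 1 N, r ^ k := by ring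
    _ ≤ 2 * (r / (1 - r)) := by
        have hge : ∑ k ∈ Finset.Ico 1 N, r ^ k = (r ^ N - r ^ 1) / (r - 1) := by
          exact geom_sum_Ico hr1.ne (by omega)
        rw [hge]
        have h1r : 0 < 1 - r := by linarith
        rw [show (r ^ N - r ^ 1) / (r - 1) = (r - r ^ N) / (1 - r) by
          rw [div_eq_div_iff (by linarith) (by linarith)]; ring]
        apply mul_le_mul_of_nonneg_left ?_ (by norm_num : (0:ℝ) ≤ 2)
        refine (div_le_div_iff_of_pos_right h1r).2 ?_
        nlinarith [pow_pos hr0 N]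
    _ = 2 * (Real.exp (-(Λ * t)) / (1 - Real.exp (-(Λ * t)))) := rfl

end Stmt11

/-- Heat-kernel estimate on the discrete circle: with `p_t(0,y) = exp(t·Δ)₀ᵧ` and
`λ₁ = 2(1 − cos(2π/N))`, one has `|p_t(0,y) − 1/N| ≤ (2/N)/(e^{λ₁t} − 1)` for all `t > 0`;
in particular for `t ≥ N²` (where `e^{λ₁ t} ≥ 3`), `|p_t(0,y) − 1/N| ≤ (4/N)e^{−λ₁t}` and
`p_t(0,y) ≤ 2/N`. -/
theorem stmt_11 (N : ℕ) [NeZero N] (hN : 3 ≤ N) (y : ZMod N) :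
    (∀ t : ℝ, 0 < t →
      |NormedSpace.exp (t • cycleLap N) 0 y - 1 / N|
        ≤ (2 / N) * (1 / (Real.exp ((2 * (1 - Real.cos (2 * Real.pi / N))) * t) - 1))) ∧
    (∀ t : ℝ, (N : ℝ) ^ 2 ≤ t →
      |NormedSpace.exp (t • cycleLap N) 0 y - 1 / N|
          ≤ (4 / N) * Real.exp (-((2 * (1 - Real.cos (2 * Real.pi / N))) * t)) ∧
        NormedSpace.exp (t • cycleLap N) 0 y ≤ 2 / N) := by
  have hN3 : (3:ℝ) ≤ (N:ℝ) := by exact_mod_cast hN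
  have hNpos : (0:ℝ) < (N:ℝ) := by linarith
  have hΛ16 : 16 / (N:ℝ)^2 ≤ 2 * (1 - Real.cos (2 * Real.pi / N)) := Stmt11.lam1_ge N hN
  have hΛpos : 0 < 2 * (1 - Real.cos (2 * Real.pi / (N:ℝ))) :=
    lt_of_lt_of_le (by positivity) hΛ16
  have claim1 : ∀ t : ℝ, 0 < t →
      |NormedSpace.exp (t • cycleLap N) 0 y - 1 / N|
        ≤ (2 / N) * (1 / (Real.exp ((2 * (1 - Real.cos (2 * Real.pi / N))) * t) - 1)) := by
    intro t ht
    have h1 := Stmt11.key_bound N t y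
    have h2 : ∑ i ∈ Finset.univ.erase (0 : ZMod N),
        Real.exp (t * (2 * Real.cos (2 * Real.pi * i.val / N) - 2))
        = ∑ k ∈ Finset.Ico 1 N, Real.exp (t * (2 * Real.cos (2 * Real.pi * k / N) - 2)) :=
      Stmt11.sum_val N (fun k => Real.exp (t * (2 * Real.cos (2 * Real.pi * k / N) - 2)))
    have h3 := Stmt11.sum_exp_le N hN ht
    have hE1 : 1 < Real.exp (2 * (1 - Real.cos (2 * Real.pi / (N:ℝ))) * t) := by
      exact Real.one_lt_exp_iff.2 (mul_pos hΛpos ht)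
    have hid : Real.exp (-(2 * (1 - Real.cos (2 * Real.pi / (N:ℝ))) * t))
          / (1 - Real.exp (-(2 * (1 - Real.cos (2 * Real.pi / (N:ℝ))) * t)))
        = 1 / (Real.exp (2 * (1 - Real.cos (2 * Real.pi / (N:ℝ))) * t) - 1) := by
      rw [Real.exp_neg]
      rw [div_eq_div_iff]
      · field_simp
      · have h0 : 0 < (Real.exp (2 * (1 - Real.cos (2 * Real.pi / (N:ℝ))) * t))⁻¹ :=
          inv_pos.2 (Real.exp_pos _)
        have hlt : (Real.exp (2 * (1 - Real.cos (2 * Real.pi / (N:ℝ))) * t))⁻¹ < 1 := by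
          rw [inv_lt_one_iff₀]
          right
          exact hE1
        linarith
      · linarith
    calc |NormedSpace.exp (t • cycleLap N) 0 y - 1 / N|
        ≤ (N:ℝ)⁻¹ * ∑ i ∈ Finset.univ.erase (0 : ZMod N),
            Real.exp (t * (2 * Real.cos (2 * Real.pi * i.val / N) - 2)) := h1
      _ = (N:ℝ)⁻¹ * ∑ k ∈ Finset.Ico 1 N,
            Real.exp (t * (2 * Real.cos (2 * Real.pi * k / N) - 2)) := by rw [h2]
      _ ≤ (N:ℝ)⁻¹ * (2 * (Real.exp (-(2 * (1 - Real.cos (2 * Real.pi / N)) * t))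
            / (1 - Real.exp (-(2 * (1 - Real.cos (2 * Real.pi / N)) * t))))) := by
          apply mul_le_mul_of_nonneg_left h3 (by positivity)
      _ = (2 / N) * (1 / (Real.exp ((2 * (1 - Real.cos (2 * Real.pi / N))) * t) - 1)) := by
          rw [hid]
          ring
  refine ⟨claim1, ?_⟩
  intro t ht'
  have ht : 0 < t := lt_of_lt_of_le (by positivity) ht'
  have h1 := claim1 t ht
  set E : ℝ := Real.exp ((2 * (1 - Real.cos (2 * Real.pi / (N:ℝ)))) * t) with hEdef
  have hΛt : 16 ≤ 2 * (1 - Real.cos (2 * Real.pi / (N:ℝ))) * t := by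
    have hsq : (0:ℝ) < (N:ℝ)^2 := by positivity
    have := mul_le_mul hΛ16 ht' hsq.le (le_of_lt hΛpos)
    calc (16:ℝ) = 16 / (N:ℝ)^2 * (N:ℝ)^2 := by field_simp
      _ ≤ 2 * (1 - Real.cos (2 * Real.pi / (N:ℝ))) * t := this
  have hE3 : 3 ≤ E := by
    have := Real.add_one_le_exp (2 * (1 - Real.cos (2 * Real.pi / (N:ℝ))) * t)
    rw [hEdef]
    linarith
  have hEpos : 0 < E := lt_of_lt_of_le (by norm_num) hE3
  have hEinv : Real.exp (-((2 * (1 - Real.cos (2 * Real.pi / (N:ℝ)))) * t)) = E⁻¹ := by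
    rw [Real.exp_neg, ← hEdef]
  constructor
  · refine h1.trans ?_
    have hkey : 1 / (E - 1) ≤ 2 * E⁻¹ := by
      rw [show (2:ℝ) * E⁻¹ = 2 / E by ring, div_le_div_iff₀ (by linarith) hEpos]
      linarith
    rw [hEinv]
    calc (2 / (N:ℝ)) * (1 / (E - 1)) ≤ (2 / (N:ℝ)) * (2 * E⁻¹) :=
          mul_le_mul_of_nonneg_left hkey (by positivity)
      _ = (4 / (N:ℝ)) * E⁻¹ := by ring
  · have habs := (abs_le.1 h1).2
    have h12 : 1 / (E - 1) ≤ 1 / 2 :=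
      one_div_le_one_div_of_le (by norm_num) (by linarith)
    have hmul : (2 / (N:ℝ)) * (1 / (E - 1)) ≤ (2 / (N:ℝ)) * (1 / 2) :=
      mul_le_mul_of_nonneg_left h12 (by positivity)
    have hring : (1:ℝ) / N + (2 / (N:ℝ)) * (1 / 2) = 2 / N := by ring
    linarith
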